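/- Let d ∈ {2,3} and s ∈ [0, 1/2]. There exists a constant C > 0, depending only on d and s, such that for all k, t > 0 with kt ≥ 1 and all measurable functions F, G : ℝ^d → [0, ∞), ∫_{{ξ : ‖ξ⁻‖ > 3kt/2}} (1 + ‖ξ‖²)^s · ((‖ξ⁻‖ + kt)² + ξ_d²)^{−1/2} · F(ξ) G(ξ) dξ ≤ C (kt)^{2s−1} ‖F‖_{L²(ℝ^d)} ‖G‖_{L²(ℝ^d)}. -/

import Mathlib

open MeasureTheory
open scoped ENNReal

/-- `‖ξ⁻‖`, the Euclidean norm of the first `d − 1` coordinates of `ξ ∈ ℝ^d`. -/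
noncomputable def xiMinusNorm {d : ℕ} (ξ : EuclideanSpace ℝ (Fin d)) : ℝ :=
  Real.sqrt (∑ i ∈ Finset.univ.filter (fun i : Fin d => (i : ℕ) < d - 1), ξ i ^ 2)

/-- `ξ_d`, the last coordinate of `ξ ∈ ℝ^d`. -/
noncomputable def xiLast {d : ℕ} (hd : 0 < d) (ξ : EuclideanSpace ℝ (Fin d)) : ℝ :=
  ξ ⟨d - 1, Nat.sub_lt hd one_pos⟩

lemma xiMinusNorm_nonneg {d : ℕ} (ξ : EuclideanSpace ℝ (Fin d)) : 0 ≤ xiMinusNorm ξ :=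
  Real.sqrt_nonneg _

lemma norm_sq_decomp {d : ℕ} (hd : 0 < d) (ξ : EuclideanSpace ℝ (Fin d)) :
    ‖ξ‖ ^ 2 = xiMinusNorm ξ ^ 2 + xiLast hd ξ ^ 2 := by
  have h1 : ‖ξ‖ ^ 2 = ∑ i, ξ i ^ 2 := by
    rw [EuclideanSpace.norm_eq]
    rw [Real.sq_sqrt (Finset.sum_nonneg fun i _ => sq_nonneg _)]
    simp [sq_abs]
  have h2 : xiMinusNorm ξ ^ 2
      = ∑ i ∈ Finset.univ.filter (fun i : Fin d => (i : ℕ) < d - 1), ξ i ^ 2 := by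
    rw [xiMinusNorm, Real.sq_sqrt (Finset.sum_nonneg fun i _ => sq_nonneg _)]
  have h3 : (Finset.univ.filter (fun i : Fin d => ¬ (i : ℕ) < d - 1))
      = {(⟨d - 1, Nat.sub_lt hd one_pos⟩ : Fin d)} := by
    ext i
    simp only [Finset.mem_filter, Finset.mem_univ, true_and, Finset.mem_singleton]
    constructor
    · intro h
      have := i.isLt
      refine Fin.ext ?_
      show (i : ℕ) = d - 1
      omega
    · intro h; subst h; simp
  rw [h1, h2, ← Finset.sum_filter_add_sum_filter_not Finset.univ
    (fun i : Fin d => (i : ℕ) < d - 1) (fun i => ξ i ^ 2), h3, Finset.sum_singleton]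
  rfl

/-- Estimate of the term `I₁`, over the region `{‖ξ⁻‖ > 3kt/2}` in the unique continuation
argument for the Helmholtz equation with a random potential. -/
theorem stmt_4 (d : ℕ) (hd : d = 2 ∨ d = 3) (s : ℝ) (hs : 0 ≤ s) (hs' : s ≤ 1 / 2) :
    ∃ C > (0 : ℝ), ∀ k t : ℝ, 0 < k → 0 < t → 1 ≤ k * t →
      ∀ F G : EuclideanSpace ℝ (Fin d) → ℝ, Measurable F → Measurable G →
        (∀ ξ, 0 ≤ F ξ) → (∀ ξ, 0 ≤ G ξ) →
        (∫⁻ ξ in {ξ | 3 * k * t / 2 < xiMinusNorm ξ},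
            ENNReal.ofReal ((1 + ‖ξ‖ ^ 2) ^ s
              * ((xiMinusNorm ξ + k * t) ^ 2 + xiLast (by omega) ξ ^ 2) ^ (-(1 / 2) : ℝ)
              * F ξ * G ξ)) ≤
          ENNReal.ofReal (C * (k * t) ^ (2 * s - 1))
            * (∫⁻ ξ, ENNReal.ofReal (F ξ ^ 2)) ^ (1 / 2 : ℝ)
            * (∫⁻ ξ, ENNReal.ofReal (G ξ ^ 2)) ^ (1 / 2 : ℝ) := by
  have hd0 : (0 : ℕ) < d := by omega
  refine ⟨(2 : ℝ) ^ s, Real.rpow_pos_of_pos two_pos s, ?_⟩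
  intro k t hk ht hkt F G hF hG hF0 hG0
  set c : ℝ := (2 : ℝ) ^ s * (k * t) ^ (2 * s - 1) with hc
  have hkt0 : 0 < k * t := mul_pos hk ht
  have hc0 : 0 ≤ c := mul_nonneg (Real.rpow_pos_of_pos two_pos s).le
    (Real.rpow_nonneg hkt0.le _)
  -- pointwise bound on the weight
  have key : ∀ ξ : EuclideanSpace ℝ (Fin d),
      (1 + ‖ξ‖ ^ 2) ^ s
        * ((xiMinusNorm ξ + k * t) ^ 2 + xiLast hd0 ξ ^ 2) ^ (-(1 / 2) : ℝ) ≤ c := by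
    intro ξ
    set m := xiMinusNorm ξ with hm
    set l := xiLast hd0 ξ with hl
    have hm0 : 0 ≤ m := xiMinusNorm_nonneg ξ
    set A : ℝ := (m + k * t) ^ 2 + l ^ 2 with hA
    have hktA : (k * t) ^ 2 ≤ A := by
      have : (k * t) ^ 2 ≤ (m + k * t) ^ 2 := by nlinarith
      nlinarith [sq_nonneg l]
    have hA0 : 0 < A := lt_of_lt_of_le (by positivity) hktA
    have h2A : 1 + ‖ξ‖ ^ 2 ≤ 2 * A := by
      have h1 : (1 : ℝ) ≤ (k * t) ^ 2 := by nlinarith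
      have := norm_sq_decomp hd0 ξ
      nlinarith [sq_nonneg l]
    have hnum : (1 + ‖ξ‖ ^ 2) ^ s ≤ 2 ^ s * A ^ s := by
      calc (1 + ‖ξ‖ ^ 2) ^ s ≤ (2 * A) ^ s :=
            Real.rpow_le_rpow (by positivity) h2A hs
        _ = 2 ^ s * A ^ s := Real.mul_rpow (by norm_num) hA0.le
    have hden : (0 : ℝ) < A ^ (-(1 / 2) : ℝ) := Real.rpow_pos_of_pos hA0 _
    calc (1 + ‖ξ‖ ^ 2) ^ s * A ^ (-(1 / 2) : ℝ)
        ≤ (2 ^ s * A ^ s) * A ^ (-(1 / 2) : ℝ) := by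
          exact mul_le_mul_of_nonneg_right hnum hden.le
      _ = 2 ^ s * A ^ (s - 1 / 2) := by
          rw [mul_assoc, ← Real.rpow_add hA0, show s + -(1 / 2 : ℝ) = s - 1 / 2 by ring]
      _ ≤ 2 ^ s * ((k * t) ^ 2) ^ (s - 1 / 2) := by
          refine mul_le_mul_of_nonneg_left ?_ (Real.rpow_pos_of_pos two_pos s).le
          exact Real.rpow_le_rpow_of_nonpos (by positivity) hktA (by linarith)
      _ = c := by
          rw [hc, ← Real.rpow_natCast (k * t) 2, ← Real.rpow_mul hkt0.le]
          congr 1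
          push_cast
          ring_nf
  -- reduce to Cauchy–Schwarz
  have step1 : (∫⁻ ξ in {ξ | 3 * k * t / 2 < xiMinusNorm ξ},
      ENNReal.ofReal ((1 + ‖ξ‖ ^ 2) ^ s
        * ((xiMinusNorm ξ + k * t) ^ 2 + xiLast hd0 ξ ^ 2) ^ (-(1 / 2) : ℝ)
        * F ξ * G ξ)) ≤
      ∫⁻ ξ, ENNReal.ofReal c * (ENNReal.ofReal (F ξ) * ENNReal.ofReal (G ξ)) := by
    refine le_trans (setLIntegral_le_lintegral _ _) (lintegral_mono fun ξ => ?_)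
    rw [← ENNReal.ofReal_mul (hF0 ξ), ← ENNReal.ofReal_mul hc0]
    refine ENNReal.ofReal_le_ofReal ?_
    have := key ξ
    have h1 : 0 ≤ F ξ * G ξ := mul_nonneg (hF0 ξ) (hG0 ξ)
    calc (1 + ‖ξ‖ ^ 2) ^ s
          * ((xiMinusNorm ξ + k * t) ^ 2 + xiLast hd0 ξ ^ 2) ^ (-(1 / 2) : ℝ) * F ξ * G ξ
        = ((1 + ‖ξ‖ ^ 2) ^ s
          * ((xiMinusNorm ξ + k * t) ^ 2 + xiLast hd0 ξ ^ 2) ^ (-(1 / 2) : ℝ)) * (F ξ * G ξ) := by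
          ring_nf
      _ ≤ c * (F ξ * G ξ) := mul_le_mul_of_nonneg_right this h1
  refine le_trans step1 ?_
  rw [lintegral_const_mul' _ _ ENNReal.ofReal_ne_top, mul_assoc]
  refine mul_le_mul_right ?_ _
  have hCS := ENNReal.lintegral_mul_le_Lp_mul_Lq (volume : Measure (EuclideanSpace ℝ (Fin d)))
    (⟨by norm_num, by norm_num, by norm_num⟩ : Real.HolderConjugate 2 2)
    (hF.ennreal_ofReal.aemeasurable) (hG.ennreal_ofReal.aemeasurable)
  refine le_trans hCS ?_
  have hFsq : ∀ ξ, ENNReal.ofReal (F ξ) ^ (2 : ℝ) = ENNReal.ofReal (F ξ ^ 2) := by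
    intro ξ
    rw [← Real.rpow_natCast (F ξ) 2, ENNReal.ofReal_rpow_of_nonneg (hF0 ξ) (by norm_num)]
    norm_num
  have hGsq : ∀ ξ, ENNReal.ofReal (G ξ) ^ (2 : ℝ) = ENNReal.ofReal (G ξ ^ 2) := by
    intro ξ
    rw [← Real.rpow_natCast (G ξ) 2, ENNReal.ofReal_rpow_of_nonneg (hG0 ξ) (by norm_num)]
    norm_num
  simp_rw [hFsq, hGsq]
  norm_num
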